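/- ISS of the perturbed gradient flow with exponentially vanishing disturbance (key estimate in the proof of Theorem 2). Let F be a finite-dimensional real inner product space, let g : F → ℝ be differentiable and ρ-strongly convex with ∇g(η*) = 0 for some η* ∈ F and ρ > 0. Let δ : [0,∞) → F be continuous with ‖δ(t)‖ ≤ D e^{−β t} for all t ≥ 0, where D ≥ 0 and β > 0. If η : [0,∞) → F is differentiable with η'(t) = −∇g(η(t)) + δ(t) for all t ≥ 0, then for every ρ₁ with 0 < ρ₁ < min{ρ, β} there exists a constant M > 0, depending only on ρ, β, ρ₁, such that ‖η(t) − η*‖ ≤ e^{−ρ₁ t} ( ‖η(0) − η*‖ + M·D ) for all t ≥ 0. -/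

import Mathlib

open scoped RealInnerProductSpace

set_option maxHeartbeats 1000000 in
/-- ISS of the perturbed gradient flow with exponentially vanishing
disturbance. For `ρ`-strongly convex `g` with `∇g(η*) = 0`, disturbance
`‖δ(t)‖ ≤ D e^{-βt}`, and `η' = -∇g(η) + δ`, for every `0 < ρ₁ < min{ρ, β}` there is a
constant `M > 0` depending only on `ρ, β, ρ₁` with
`‖η(t) - η*‖ ≤ e^{-ρ₁ t} (‖η(0) - η*‖ + M D)`. -/
theorem iss_perturbed_gradient_flow
    {F : Type*} [NormedAddCommGroup F] [InnerProductSpace ℝ F] [FiniteDimensional ℝ F]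
    (ρ β ρ₁ : ℝ) (hρ : 0 < ρ) (hβ : 0 < β) (hρ₁ : 0 < ρ₁) (hρ₁' : ρ₁ < min ρ β) :
    ∃ M : ℝ, 0 < M ∧
      ∀ g : F → ℝ, Differentiable ℝ g →
      ∀ ηstar : F, gradient g ηstar = 0 →
      (∀ u v : F, g v ≥ g u + ⟪gradient g u, v - u⟫ + (ρ / 2) * ‖v - u‖ ^ 2) →
      ∀ D : ℝ, 0 ≤ D →
      ∀ δ : ℝ → F, ContinuousOn δ (Set.Ici (0 : ℝ)) →
      (∀ t, 0 ≤ t → ‖δ t‖ ≤ D * Real.exp (-β * t)) →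
      ∀ η : ℝ → F,
      (∀ t, 0 ≤ t → HasDerivAt η (-gradient g (η t) + δ t) t) →
      ∀ t, 0 ≤ t → ‖η t - ηstar‖ ≤ Real.exp (-ρ₁ * t) * (‖η 0 - ηstar‖ + M * D) := by
  have hmρ : min ρ β ≤ ρ := min_le_left _ _
  have hmβ : min ρ β ≤ β := min_le_right _ _
  obtain ⟨ρ₂, h12, h2m⟩ : ∃ ρ₂, ρ₁ < ρ₂ ∧ ρ₂ < min ρ β :=
    ⟨(ρ₁ + min ρ β) / 2, by cases le_total ρ β with
      | inl h => simp [min_eq_left h] at *; constructor <;> linarith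
      | inr h => simp [min_eq_right h] at *; constructor <;> linarith⟩
  have hρ₂pos : 0 < ρ₂ := lt_trans hρ₁ h12
  have h2ρ : ρ₂ < ρ := lt_of_lt_of_le h2m hmρ
  have h2β : ρ₂ < β := lt_of_lt_of_le h2m hmβ
  have hβρ₂ : 0 < β - ρ₂ := by linarith
  obtain ⟨M, hMpos, hM⟩ : ∃ M : ℝ, 0 < M ∧ M * (β - ρ₂) = 1 :=
    ⟨1 / (β - ρ₂), by positivity, by field_simp⟩
  refine ⟨M, hMpos, ?_⟩
  intro g hg ηstar hgrad hsc D hD δ hδc hδ η hη t ht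
  -- co-coercivity
  have key : ∀ x : F, ρ * ‖x - ηstar‖ ^ 2 ≤ ⟪gradient g x, x - ηstar⟫ := by
    intro x
    have h1 := hsc x ηstar
    have h2 := hsc ηstar x
    rw [hgrad] at h2
    have hne : ‖ηstar - x‖ = ‖x - ηstar‖ := norm_sub_rev _ _
    have hie : ⟪gradient g x, ηstar - x⟫ = -⟪gradient g x, x - ηstar⟫ := by
      rw [← inner_neg_right]; congr 1; abel
    simp only [inner_zero_left] at h2
    rw [hne, hie] at h1
    nlinarith
  set φ0 := ‖η 0 - ηstar‖ with hφ0
  clear_value φ0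
  have hφ0nn : 0 ≤ φ0 := hφ0 ▸ norm_nonneg _
  -- main claim with ε margin
  have claim : ∀ ε : ℝ, 0 < ε →
      ‖η t - ηstar‖ ≤ Real.exp (-ρ₂ * t) * (φ0 + M * D) + Real.exp (-ρ₂ * t) * ε := by
    intro ε hε
    set B₀ : ℝ → ℝ := fun s =>
      Real.exp (-ρ₂ * s) * (φ0 + ε) + M * D * (Real.exp (-ρ₂ * s) - Real.exp (-β * s))
      with hB₀def
    clear_value B₀
    have hB₀pos : ∀ s, 0 ≤ s → 0 < B₀ s := by
      intro s hs
      have h1 : Real.exp (-β * s) ≤ Real.exp (-ρ₂ * s) := by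
        apply Real.exp_le_exp.mpr; nlinarith
      have h2 : (0:ℝ) < Real.exp (-ρ₂ * s) * (φ0 + ε) := by positivity
      have h3 : (0:ℝ) ≤ M * D * (Real.exp (-ρ₂ * s) - Real.exp (-β * s)) := by
        apply mul_nonneg (by positivity); linarith
      rw [hB₀def]; dsimp only; linarith
    have hB₀deriv : ∀ s : ℝ,
        HasDerivAt B₀ (-ρ₂ * B₀ s + D * Real.exp (-β * s)) s := by
      intro s
      have he1 : HasDerivAt (fun u : ℝ => Real.exp (-ρ₂ * u)) (-ρ₂ * Real.exp (-ρ₂ * s)) s := by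
        have := ((hasDerivAt_id s).const_mul (-ρ₂)).exp
        simpa [mul_comm] using this
      have he2 : HasDerivAt (fun u : ℝ => Real.exp (-β * u)) (-β * Real.exp (-β * s)) s := by
        have := ((hasDerivAt_id s).const_mul (-β)).exp
        simpa [mul_comm] using this
      have hd := ((he1.mul_const (φ0 + ε)).add (((he1.sub he2)).const_mul (M * D)))
      rw [hB₀def]
      refine hd.congr_deriv ?_
      dsimp only
      linear_combination D * Real.exp (-β * s) * hM
    have hfderiv : ∀ s, 0 ≤ s → HasDerivAt (fun u => ‖η u - ηstar‖ ^ 2)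
        (2 * ⟪-gradient g (η s) + δ s, η s - ηstar⟫) s := by
      intro s hs
      have hw : HasDerivAt (fun u => η u - ηstar) (-gradient g (η s) + δ s) s :=
        (hη s hs).sub_const ηstar
      have hi := HasDerivAt.inner ℝ hw hw
      have heq : (fun u => ‖η u - ηstar‖ ^ 2) = fun u => ⟪η u - ηstar, η u - ηstar⟫ := by
        ext u; rw [real_inner_self_eq_norm_sq]
      rw [heq]
      refine hi.congr_deriv ?_
      rw [real_inner_comm]; ring
    have hf : ContinuousOn (fun u => ‖η u - ηstar‖ ^ 2) (Set.Icc 0 t) := by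
      intro x hx
      exact ((hfderiv x hx.1).continuousAt).continuousWithinAt
    have hf' : ∀ x ∈ Set.Ico (0:ℝ) t, HasDerivWithinAt (fun u => ‖η u - ηstar‖ ^ 2)
        (2 * ⟪-gradient g (η x) + δ x, η x - ηstar⟫) (Set.Ici x) x :=
      fun x hx => (hfderiv x hx.1).hasDerivWithinAt
    have ha : ‖η 0 - ηstar‖ ^ 2 ≤ (B₀ 0) ^ 2 := by
      have hB00 : B₀ 0 = φ0 + ε := by rw [hB₀def]; simp
      rw [hB00, ← hφ0]
      nlinarith
    have hB : ∀ x : ℝ, HasDerivAt (fun s => (B₀ s) ^ 2)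
        (2 * B₀ x * (-ρ₂ * B₀ x + D * Real.exp (-β * x))) x := by
      intro x
      have := (hB₀deriv x).mul (hB₀deriv x)
      have heq : (fun s => (B₀ s) ^ 2) = fun s => B₀ s * B₀ s := by
        ext s; ring
      rw [heq]
      refine this.congr_deriv ?_
      ring
    have bound : ∀ x ∈ Set.Ico (0:ℝ) t, ‖η x - ηstar‖ ^ 2 = (B₀ x) ^ 2 →
        2 * ⟪-gradient g (η x) + δ x, η x - ηstar⟫
          < 2 * B₀ x * (-ρ₂ * B₀ x + D * Real.exp (-β * x)) := by
      intro x hx hfx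
      have hx0 : 0 ≤ x := hx.1
      have hb : 0 < B₀ x := hB₀pos x hx0
      have hwn : ‖η x - ηstar‖ = B₀ x := by
        nlinarith [norm_nonneg (η x - ηstar)]
      have hδx := hδ x hx0
      have hkey := key (η x)
      have hinner : ⟪δ x, η x - ηstar⟫ ≤ D * Real.exp (-β * x) * B₀ x := by
        calc ⟪δ x, η x - ηstar⟫ ≤ ‖δ x‖ * ‖η x - ηstar‖ := real_inner_le_norm _ _
          _ ≤ D * Real.exp (-β * x) * B₀ x := by
              rw [hwn]; exact mul_le_mul_of_nonneg_right hδx (le_of_lt hb)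
      have hsplit : ⟪-gradient g (η x) + δ x, η x - ηstar⟫
          = -⟪gradient g (η x), η x - ηstar⟫ + ⟪δ x, η x - ηstar⟫ := by
        rw [inner_add_left, inner_neg_left]
      rw [hsplit]
      rw [hwn] at hkey
      nlinarith [mul_pos hb hb, mul_pos (sub_pos.mpr h2ρ) (mul_pos hb hb)]
    have comp := image_le_of_deriv_right_lt_deriv_boundary (B := fun s => B₀ s ^ 2)
      (B' := fun s => 2 * B₀ s * (-ρ₂ * B₀ s + D * Real.exp (-β * s))) hf hf' ha hB bound
      (Set.mem_Icc.mpr ⟨ht, le_refl t⟩)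
    have hbt : ‖η t - ηstar‖ ≤ B₀ t := by
      have hb : 0 < B₀ t := hB₀pos t ht
      have comp' : ‖η t - ηstar‖ ^ 2 ≤ B₀ t ^ 2 := comp
      nlinarith [norm_nonneg (η t - ηstar), comp']
    calc ‖η t - ηstar‖ ≤ B₀ t := hbt
      _ ≤ Real.exp (-ρ₂ * t) * (φ0 + M * D) + Real.exp (-ρ₂ * t) * ε := by
          rw [hB₀def]; dsimp only
          have h1 : (0:ℝ) ≤ M * D * Real.exp (-β * t) := by positivity
          nlinarith
  -- remove ε
  have hρ₂le : ‖η t - ηstar‖ ≤ Real.exp (-ρ₂ * t) * (φ0 + M * D) := by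
    apply le_of_forall_pos_le_add
    intro ε' hε'
    have hexp : 0 < Real.exp (-ρ₂ * t) := Real.exp_pos _
    have hcl := claim (ε' / Real.exp (-ρ₂ * t)) (by positivity)
    calc ‖η t - ηstar‖ ≤ Real.exp (-ρ₂ * t) * (φ0 + M * D)
          + Real.exp (-ρ₂ * t) * (ε' / Real.exp (-ρ₂ * t)) := hcl
      _ = Real.exp (-ρ₂ * t) * (φ0 + M * D) + ε' := by field_simp
  calc ‖η t - ηstar‖ ≤ Real.exp (-ρ₂ * t) * (φ0 + M * D) := hρ₂le
    _ ≤ Real.exp (-ρ₁ * t) * (φ0 + M * D) := by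
        apply mul_le_mul_of_nonneg_right
        · apply Real.exp_le_exp.mpr; nlinarith
        · positivity
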